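/- With notation as in the Hawaiian-earring word model, the injection σ : G → X_∞ sending g to the limit of reduced representatives σ_n(Π_n(g)) satisfies: for every x ∈ X_∞ with q(x) = g and every N, the number of occurrences of x_N^{±1} in R_N(x) is at least the number of occurrences of x_N^{±1} in R_N(σ(g)). Moreover σ is injective but not continuous: the sequence x_1 x_n x_1^{-1} converges to the identity in G while σ(x_1 x_n x_1^{-1}) converges to the nonidentity word (x_1 x_1^{-1}, x_1 x_1^{-1}, ...) in X_∞. -/

import Mathlib

open Filter Topology

instance : TopologicalSpace (List (ℕ × Bool)) := ⊥

instance : DiscreteTopology (List (ℕ × Bool)) := ⟨rfl⟩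

/-- `X_∞ = lim← Xₙ`, `Xₙ` the discrete free monoid on the letters of index
`< n`, bonding retractions deleting the top generator pair. -/
def Xinf : Type :=
  {x : ℕ → List (ℕ × Bool) //
    (∀ n, ∀ l ∈ x n, l.1 < n) ∧
    ∀ n, (x (n + 1)).filter (fun l => decide (l.1 < n)) = x n}

instance : TopologicalSpace Xinf :=
  inferInstanceAs (TopologicalSpace
    {x : ℕ → List (ℕ × Bool) //
      (∀ n, ∀ l ∈ x n, l.1 < n) ∧
      ∀ n, (x (n + 1)).filter (fun l => decide (l.1 < n)) = x n})

/-- The equivalence identifying words in `X_∞` with the same image in every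
free group; the quotient is the Hawaiian earring group model `G`. -/
def qsetoid : Setoid Xinf :=
  ⟨fun u v => ∀ n, FreeGroup.mk (u.1 n) = FreeGroup.mk (v.1 n),
    ⟨fun _ _ => rfl, fun h n => (h n).symm, fun h1 h2 n => (h1 n).trans (h2 n)⟩⟩

/-- `cnt N w` = number of occurrences of the letters `x_{N+1}^{±1}` in `w`. -/
def cnt (N : ℕ) (w : List (ℕ × Bool)) : ℕ := (w.filter (fun l => decide (l.1 = N))).length

/-- Claims about the (discontinuous) injection `σ : G → X_∞` sending `g` to the
limit of reduced representatives (any function `σq` on `X_∞`, constant on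
classes, whose coordinates are the eventual reduced filtered words):
(a) for every `x` with `q(x) = g` and every `N`, the number of occurrences of
`x_N^{±1}` in `R_N(x)` is at least the corresponding count for `σ(g)`;
(b) `σ` is injective (as a function on `G`);
(c) `σ` is not continuous: the words `e k = x₁ x_{k+2} x₁⁻¹` converge to the
identity `o` in the quotient `G`, while `σ(e k) = e k` converges in `X_∞` to
the nonidentity unreduced word `y = (x₁x₁⁻¹, x₁x₁⁻¹, ...) ≠ o`. -/
private lemma cnt_step {N : ℕ} {L₁ L₂ : List (ℕ × Bool)} (h : FreeGroup.Red.Step L₁ L₂) :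
    cnt N L₂ ≤ cnt N L₁ := by
  cases h with
  | @not La Lb x b =>
    by_cases hx : x = N <;> simp [cnt, List.filter_append, hx] <;> omega

private lemma cnt_red {N : ℕ} {L₁ L₂ : List (ℕ × Bool)} (h : FreeGroup.Red L₁ L₂) :
    cnt N L₂ ≤ cnt N L₁ := by
  induction h with
  | refl => exact le_refl _
  | tail _ h2 ih => exact le_trans (cnt_step h2) ih

private lemma red_filter (n : ℕ) {L₁ L₂ : List (ℕ × Bool)} (h : FreeGroup.Red L₁ L₂) :
    FreeGroup.Red (L₁.filter (fun l => decide (l.1 < n)))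
      (L₂.filter (fun l => decide (l.1 < n))) := by
  induction h with
  | refl => exact Relation.ReflTransGen.refl
  | tail _ h2 ih =>
    refine ih.trans ?_
    cases h2 with
    | @not La Lb x b =>
      by_cases hx : x < n
      · have heq : ((La ++ (x, b) :: (x, !b) :: Lb).filter (fun l => decide (l.1 < n)))
            = La.filter (fun l => decide (l.1 < n)) ++
              (x, b) :: (x, !b) :: Lb.filter (fun l => decide (l.1 < n)) := by
          simp [List.filter_append, List.filter_cons, hx]
        rw [heq, List.filter_append]
        exact Relation.ReflTransGen.single FreeGroup.Red.Step.not
      · have heq : ((La ++ (x, b) :: (x, !b) :: Lb).filter (fun l => decide (l.1 < n)))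
            = ((La ++ Lb).filter (fun l => decide (l.1 < n))) := by
          simp [List.filter_append, List.filter_cons, hx]
        rw [heq]

private lemma mk_red {L₁ L₂ : List (ℕ × Bool)} (h : FreeGroup.Red L₁ L₂) :
    FreeGroup.mk L₁ = FreeGroup.mk L₂ :=
  FreeGroup.Red.exact.2 ⟨L₂, h, Relation.ReflTransGen.refl⟩

private lemma filt_stable (u : Xinf) {n m : ℕ} (h : n ≤ m) :
    (u.1 m).filter (fun l => decide (l.1 < n)) = u.1 n := by
  induction m, h using Nat.le_induction with
  | base =>
    exact List.filter_eq_self.2 fun l hl => by simpa using u.2.1 n l hl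
  | succ m hm ih =>
    have hc := u.2.2 m
    calc (u.1 (m + 1)).filter (fun l => decide (l.1 < n))
        = ((u.1 (m + 1)).filter (fun l => decide (l.1 < m))).filter
            (fun l => decide (l.1 < n)) := by
          rw [List.filter_filter]
          refine List.filter_congr fun a _ => ?_
          by_cases h1 : a.1 < n
          · simp [h1, lt_of_lt_of_le h1 hm]
          · simp [h1]
      _ = u.1 n := by rw [hc, ih]

private lemma cnt_filter (N : ℕ) (w : List (ℕ × Bool)) :
    cnt N (w.filter (fun l => decide (l.1 < N + 1))) = cnt N w := by
  unfold cnt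
  rw [List.filter_filter]
  congr 1
  exact List.filter_congr fun a _ => by
    by_cases h : a.1 = N <;> simp [h, Nat.lt_succ_self]

private lemma red3 (k : ℕ) :
    FreeGroup.reduce [((0:ℕ),true),(k+1,true),(0,false)] = [(0,true),(k+1,true),(0,false)] := by
  simp [FreeGroup.reduce, Nat.succ_ne_zero]

private lemma tendsto_xinf (f : ℕ → Xinf) (p : Xinf)
    (h : ∀ n, ∀ᶠ k in atTop, (f k).1 n = p.1 n) : Tendsto f atTop (𝓝 p) := by
  rw [show Tendsto f atTop (𝓝 p) ↔ _ from tendsto_subtype_rng, tendsto_pi_nhds]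
  intro n
  exact tendsto_const_nhds.congr' (by filter_upwards [h n] with k hk using hk.symm)

theorem stmt_18 (σq : Xinf → Xinf)
    (hσ : ∀ u : Xinf, ∀ N, ∃ M, ∀ m, M ≤ m →
      (σq u).1 N = ((FreeGroup.mk (u.1 m)).toWord).filter (fun l => decide (l.1 < N))) :
    (∀ u : Xinf, ∀ N, cnt N ((σq u).1 (N + 1)) ≤ cnt N (u.1 (N + 1))) ∧
    (∀ u v : Xinf, σq u = σq v → ∀ n, FreeGroup.mk (u.1 n) = FreeGroup.mk (v.1 n)) ∧
    (∀ (e : ℕ → Xinf) (o y : Xinf),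
      (∀ k n, (e k).1 n =
        ([(0, true), (k + 1, true), (0, false)] : List (ℕ × Bool)).filter
          (fun l => decide (l.1 < n))) →
      (∀ n, o.1 n = []) →
      (∀ n, y.1 n =
        ([(0, true), (0, false)] : List (ℕ × Bool)).filter (fun l => decide (l.1 < n))) →
      Tendsto (fun k => Quotient.mk qsetoid (e k)) atTop (𝓝 (Quotient.mk qsetoid o)) ∧
      Tendsto (fun k => σq (e k)) atTop (𝓝 y) ∧ y ≠ o) := by
  refine ⟨?_, ?_, ?_⟩
  · -- (a)
    intro u N
    obtain ⟨M, hM⟩ := hσ u (N + 1)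
    have h1 := hM (max M (N + 1)) (le_max_left _ _)
    rw [h1, FreeGroup.toWord_mk, cnt_filter]
    calc cnt N (FreeGroup.reduce (u.1 (max M (N + 1)))) ≤ cnt N (u.1 (max M (N + 1))) :=
          cnt_red FreeGroup.reduce.red
      _ = cnt N ((u.1 (max M (N + 1))).filter (fun l => decide (l.1 < N + 1))) :=
          (cnt_filter _ _).symm
      _ = cnt N (u.1 (N + 1)) := by rw [filt_stable u (le_max_right _ _)]
  · -- (b)
    intro u v huv n
    obtain ⟨M₁, h1⟩ := hσ u n
    obtain ⟨M₂, h2⟩ := hσ v n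
    set m := max (max M₁ M₂) n with hm
    have e1 := h1 m (le_trans (le_max_left _ _) (le_max_left _ _))
    have e2 := h2 m (le_trans (le_max_right _ _) (le_max_left _ _))
    have key : ∀ w : Xinf,
        FreeGroup.mk (((FreeGroup.mk (w.1 m)).toWord).filter (fun l => decide (l.1 < n)))
          = FreeGroup.mk (w.1 n) := by
      intro w
      rw [FreeGroup.toWord_mk]
      have hr := mk_red (red_filter n (FreeGroup.reduce.red (L := w.1 m)))
      rw [filt_stable w (le_max_right _ _)] at hr
      exact hr.symm
    rw [← key u, ← key v, ← e1, ← e2, huv]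
  · -- (c)
    intro e o y he ho hy
    have hyo : Quotient.mk qsetoid y = Quotient.mk qsetoid o := by
      refine Quotient.sound fun n => ?_
      rw [ho]
      match n with
      | 0 => simp [hy]
      | n + 1 =>
        rw [hy]
        have : (([(0, true), (0, false)] : List (ℕ × Bool)).filter
            (fun l => decide (l.1 < n + 1))) = [(0, true), (0, false)] := by simp
        rw [this]
        exact Quot.sound (FreeGroup.Red.Step.not (L₁ := []) (L₂ := []) (x := 0) (b := true))
    have hey : Tendsto e atTop (𝓝 y) := by
      refine tendsto_xinf _ _ fun n => ?_
      filter_upwards [eventually_ge_atTop n] with k hk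
      rw [he, hy]
      have h1 : ¬ (k + 1 < n) := by omega
      simp [List.filter_cons, h1]
    refine ⟨?_, ?_, ?_⟩
    · rw [tendsto_nhds]
      intro s hs hos
      have hV : IsOpen (Quotient.mk qsetoid ⁻¹' s) := isOpen_coinduced.mp hs
      have hyV : y ∈ Quotient.mk qsetoid ⁻¹' s := by
        simpa [Set.mem_preimage, hyo] using hos
      exact hey.eventually (hV.mem_nhds hyV)
    · refine tendsto_xinf _ _ fun N => ?_
      filter_upwards [eventually_ge_atTop N] with k hk
      obtain ⟨M, hM⟩ := hσ (e k) N
      have h1 := hM (max M (k + 2)) (le_max_left _ _)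
      have hem : (e k).1 (max M (k + 2)) = [(0, true), (k + 1, true), (0, false)] := by
        rw [he]
        have h0 : (0:ℕ) < max M (k + 2) := lt_of_lt_of_le (by omega) (le_max_right _ _)
        have hk2 : k + 1 < max M (k + 2) := lt_of_lt_of_le (by omega) (le_max_right _ _)
        simp [List.filter_cons, h0, hk2]
      rw [h1, hem, FreeGroup.toWord_mk, red3, hy]
      have h2 : ¬ (k + 1 < N) := by omega
      simp [List.filter_cons, h2]
    · intro h
      have := congrArg (fun z : Xinf => z.1 1) h
      simp [hy, ho] at this
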